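/- Let f : ℤ_2 → ℤ_2 be a 1-Lipschitz function (T-function) with van der Put series f(x) = Σ_{m=0}^∞ B_m·χ(m,x). Then f is bijective modulo 2^k for every k ≥ 1 (i.e., f is measure-preserving) if and only if the following two conditions hold simultaneously: (1) B_0 + B_1 ≡ 1 (mod 2); (2) |B_m|_2 = 2^{−⌊log_2 m⌋} for all m ≥ 2. -/

import Mathlib

open Filter

/-- The map induced by `f : ℤ_[2] → ℤ_[2]` on `ℤ/2^kℤ` (for 1-Lipschitz `f` this is the
well-defined reduction of `f` modulo `2^k`). -/
noncomputable def inducedMod (f : ℤ_[2] → ℤ_[2]) (k : ℕ) : ZMod (2 ^ k) → ZMod (2 ^ k) :=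
  fun z => PadicInt.toZModPow k (f ((z.val : ℤ_[2])))

/-- The van der Put characteristic function `χ(m,·)`: the characteristic function (with values
in `{0,1} ⊆ ℤ_2`) of the ball `m + 2^{⌊log_2 m⌋+1}ℤ_2`, with the convention `⌊log_2 0⌋ = 0`. -/
noncomputable def vdpChi (m : ℕ) (x : ℤ_[2]) : ℤ_[2] :=
  if ‖x - (m : ℤ_[2])‖ ≤ (2 : ℝ) ^ (-((Nat.log 2 m : ℤ) + 1)) then 1 else 0


lemma two_cast : ((2:ℕ) : ℤ_[2]) = 2 := by norm_cast
lemma two_castR : ((2:ℕ) : ℝ) = 2 := by norm_cast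

lemma dvd_iff_norm_le (x : ℤ_[2]) (k : ℕ) :
    (2:ℤ_[2])^k ∣ x ↔ ‖x‖ ≤ (2:ℝ)^(-(k:ℤ)) := by
  rw [← two_cast, ← two_castR, PadicInt.norm_le_pow_iff_mem_span_pow,
    Ideal.mem_span_singleton]

lemma toZModPow_eq_iff (x y : ℤ_[2]) (k : ℕ) :
    PadicInt.toZModPow k x = PadicInt.toZModPow k y ↔ (2:ℤ_[2])^k ∣ (x - y) := by
  rw [← sub_eq_zero, ← map_sub, ← RingHom.mem_ker, PadicInt.ker_toZModPow,
      Ideal.mem_span_singleton, two_cast]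

lemma vdpChi_nat (j a : ℕ) :
    vdpChi j (a : ℤ_[2]) = if a ≡ j [MOD 2^(Nat.log 2 j + 1)] then 1 else 0 := by
  unfold vdpChi
  congr 1
  rw [eq_iff_iff]
  have h1 : ((a : ℤ_[2]) - (j : ℤ_[2])) = (((a : ℤ) - (j:ℤ) : ℤ) : ℤ_[2]) := by push_cast; ring
  rw [show (-((Nat.log 2 j : ℤ) + 1)) = -((Nat.log 2 j + 1 : ℕ) : ℤ) by push_cast; ring]
  rw [h1, ← dvd_iff_norm_le, ← two_cast, PadicInt.pow_p_dvd_int_iff, Nat.modEq_iff_dvd]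
  push_cast
  exact dvd_sub_comm

lemma vdpChi_eq_zero {j a : ℕ} (hja : a < j) : vdpChi j (a:ℤ_[2]) = 0 := by
  rw [vdpChi_nat, if_neg]
  intro h
  have hj : j < 2^(Nat.log 2 j + 1) := Nat.lt_pow_succ_log_self (by norm_num) j
  exact absurd (h.eq_of_lt_of_lt (lt_trans hja hj) hj) (Nat.ne_of_lt hja)

lemma vdpChi_self (a : ℕ) : vdpChi a (a:ℤ_[2]) = 1 := by
  rw [vdpChi_nat, if_pos (Nat.ModEq.refl a)]

lemma f_eval (B : ℕ → ℤ_[2]) (f : ℤ_[2] → ℤ_[2])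
    (hf : ∀ x, f x = ∑' m, B m * vdpChi m x) (a N : ℕ) (ha : a < N) :
    f (a:ℤ_[2]) = ∑ j ∈ Finset.range N, B j * vdpChi j (a:ℤ_[2]) := by
  rw [hf]
  refine tsum_eq_sum ?_
  intro j hj
  rw [vdpChi_eq_zero (lt_of_lt_of_le ha (le_of_not_gt (fun hlt => hj (Finset.mem_range.mpr hlt)))), mul_zero]

lemma B_eq (B : ℕ → ℤ_[2]) (f : ℤ_[2] → ℤ_[2])
    (hf : ∀ x, f x = ∑' m, B m * vdpChi m x) (m : ℕ) (hm : 2 ≤ m) :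
    B m = f (m:ℤ_[2]) - f ((m - 2^(Nat.log 2 m) : ℕ) : ℤ_[2]) := by
  set n := Nat.log 2 m with hn
  have hn1 : 1 ≤ n := Nat.log_pos (by norm_num) hm
  have hpow : 2^n ≤ m := Nat.pow_log_le_self 2 (by omega)
  have hm2 : m < 2^(n+1) := Nat.lt_pow_succ_log_self (by norm_num) m
  set m0 := m - 2^n with hm0
  have hm0m : m0 < m := by
    have : 0 < 2^n := Nat.pow_pos (by norm_num)
    omega
  have hm0n : m0 < 2^n := by
    have : 2^n + 2^n = 2^(n+1) := by ring
    omega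
  rw [f_eval B f hf m (2^(n+1)) hm2,
      f_eval B f hf m0 (2^(n+1)) (lt_trans hm0n (by
        exact Nat.pow_lt_pow_succ (by norm_num))),
      ← Finset.sum_sub_distrib]
  rw [Finset.sum_eq_single m]
  · rw [vdpChi_self, vdpChi_eq_zero hm0m, mul_one, mul_zero, sub_zero]
  · intro j hjr hjm
    have hL : j < 2^(Nat.log 2 j + 1) := Nat.lt_pow_succ_log_self (by norm_num) j
    have : vdpChi j (m:ℤ_[2]) = vdpChi j (m0:ℤ_[2]) := by
      rcases lt_or_ge (Nat.log 2 j) n with hc | hc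
      · -- small level: m ≡ m0
        rw [vdpChi_nat, vdpChi_nat]
        have hdvd : 2^(Nat.log 2 j + 1) ∣ 2^n := pow_dvd_pow 2 hc
        have hmm0 : m ≡ m0 [MOD 2^(Nat.log 2 j + 1)] :=
          ((Nat.modEq_iff_dvd' (le_of_lt hm0m)).mpr (by
            have : m - m0 = 2^n := by omega
            rw [this]; exact hdvd)).symm
        by_cases h : m0 ≡ j [MOD 2^(Nat.log 2 j + 1)]
        · rw [if_pos (hmm0.trans h), if_pos h]
        · rw [if_neg (fun hh => h (hmm0.symm.trans hh)), if_neg h]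
      · -- big level: both zero
        have hm2' : m < 2^(Nat.log 2 j + 1) :=
          lt_of_lt_of_le hm2 (Nat.pow_le_pow_right (by norm_num) (by omega))
        rw [vdpChi_nat, vdpChi_nat, if_neg, if_neg]
        · intro h
          have hm0lt : m0 < 2^(Nat.log 2 j + 1) :=
            lt_of_lt_of_le hm0n (Nat.pow_le_pow_right (by norm_num) (by omega))
          have hm0j : m0 = j := h.eq_of_lt_of_lt hm0lt hL
          have hj0 : j ≠ 0 := by
            intro h0; rw [h0, Nat.log_zero_right] at hc; omega
          have : 2^n ≤ m0 := by
            calc 2^n ≤ 2^(Nat.log 2 j) := Nat.pow_le_pow_right (by norm_num) hc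
            _ ≤ j := Nat.pow_log_le_self 2 hj0
            _ = m0 := hm0j.symm
          omega
        · intro h
          exact hjm (h.eq_of_lt_of_lt hm2' hL).symm
    rw [this]; ring
  · intro h
    exact absurd (Finset.mem_range.mpr hm2) h

lemma norm_eq_pow_iff (x : ℤ_[2]) (n : ℕ) :
    ‖x‖ = (2:ℝ)^(-(n:ℤ)) ↔ ((2:ℤ_[2])^n ∣ x ∧ ¬ (2:ℤ_[2])^(n+1) ∣ x) := by
  rw [dvd_iff_norm_le, dvd_iff_norm_le]
  constructor
  · intro h
    refine ⟨le_of_eq h, ?_⟩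
    rw [h]
    intro hle
    have : (2:ℝ)^(-((n:ℤ)+1)) < (2:ℝ)^(-(n:ℤ)) := by
      apply zpow_lt_zpow_right₀ (by norm_num)
      omega
    rw [show (-((n+1:ℕ):ℤ)) = -((n:ℤ)+1) by push_cast; ring] at hle
    linarith
  · rintro ⟨h1, h2⟩
    refine le_antisymm h1 ?_
    by_contra hlt
    push_neg at hlt
    apply h2
    have := (PadicInt.norm_lt_pow_iff_norm_le_pow_sub_one x (-(n:ℤ))).mp (by
      rwa [two_castR])
    rw [two_castR] at this
    rwa [show (-((n+1:ℕ):ℤ)) = -(n:ℤ)-1 by push_cast; ring]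

lemma norm_natCast_sub (a b : ℕ) (hba : b ≤ a) (n : ℕ) (hdvd : 2^n ∣ (a - b)) :
    (2:ℤ_[2])^n ∣ ((a:ℤ_[2]) - (b:ℤ_[2])) := by
  have h1 : ((a:ℤ_[2]) - (b:ℤ_[2])) = ((a - b : ℕ) : ℤ_[2]) := by
    push_cast [Nat.cast_sub hba]; ring
  rw [h1]
  obtain ⟨c, hc⟩ := hdvd
  rw [hc]
  push_cast
  exact Dvd.intro _ rfl

lemma lip_dvd (f : ℤ_[2] → ℤ_[2]) (hlip : ∀ a b : ℤ_[2], ‖f a - f b‖ ≤ ‖a - b‖)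
    (x y : ℤ_[2]) (n : ℕ) (h : (2:ℤ_[2])^n ∣ (x - y)) :
    (2:ℤ_[2])^n ∣ (f x - f y) := by
  rw [dvd_iff_norm_le] at h ⊢
  exact le_trans (hlip x y) h

lemma inducedMod_natCast (f : ℤ_[2] → ℤ_[2]) (k : ℕ) (a : ℕ) (ha : a < 2^k) :
    inducedMod f k ((a : ZMod (2^k))) = PadicInt.toZModPow k (f (a:ℤ_[2])) := by
  haveI : NeZero (2^k) := ⟨by positivity⟩
  unfold inducedMod
  rw [ZMod.val_natCast_of_lt ha]

lemma natCast_inj_of_lt {k a b : ℕ} (ha : a < 2^k) (hb : b < 2^k)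
    (h : (a : ZMod (2^k)) = (b : ZMod (2^k))) : a = b := by
  rw [← ZMod.val_natCast_of_lt ha, ← ZMod.val_natCast_of_lt hb, h]

lemma B0_eq (B : ℕ → ℤ_[2]) (f : ℤ_[2] → ℤ_[2])
    (hf : ∀ x, f x = ∑' m, B m * vdpChi m x) : f 0 = B 0 := by
  have h := f_eval B f hf 0 1 (by norm_num)
  rw [Finset.sum_range_one, vdpChi_self 0, mul_one] at h
  simpa using h

lemma B1_eq (B : ℕ → ℤ_[2]) (f : ℤ_[2] → ℤ_[2])
    (hf : ∀ x, f x = ∑' m, B m * vdpChi m x) : f 1 = B 1 := by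
  have h := f_eval B f hf 1 2 (by norm_num)
  have h0 : vdpChi 0 ((1:ℕ):ℤ_[2]) = 0 := by
    rw [vdpChi_nat, if_neg (by rw [Nat.log_zero_right]; decide)]
  rw [Finset.sum_range_succ, Finset.sum_range_one, vdpChi_self 1, h0,
      mul_zero, zero_add, mul_one] at h
  simpa using h

lemma not_two_dvd_one : ¬ (2:ℤ_[2]) ∣ 1 := by
  intro h
  have := (dvd_iff_norm_le 1 1).mp (by rwa [pow_one])
  rw [norm_one] at this
  norm_num at this

lemma forward_dir (B : ℕ → ℤ_[2]) (f : ℤ_[2] → ℤ_[2])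
    (hlip : ∀ a b : ℤ_[2], ‖f a - f b‖ ≤ ‖a - b‖)
    (hf : ∀ x, f x = ∑' m, B m * vdpChi m x)
    (hbij : ∀ k : ℕ, 1 ≤ k → Function.Bijective (inducedMod f k)) :
    ((2 : ℤ_[2]) ∣ (B 0 + B 1 - 1) ∧
      ∀ m : ℕ, 2 ≤ m → ‖B m‖ = (2 : ℝ) ^ (-(Nat.log 2 m : ℤ))) := by
  constructor
  · -- condition (1)
    have hinj := (hbij 1 le_rfl).injective
    have hne : PadicInt.toZModPow 1 (f ((0:ℕ):ℤ_[2])) ≠ PadicInt.toZModPow 1 (f ((1:ℕ):ℤ_[2])) := by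
      intro h
      rw [← inducedMod_natCast f 1 0 (by norm_num), ← inducedMod_natCast f 1 1 (by norm_num)] at h
      have := natCast_inj_of_lt (k := 1) (by norm_num) (by norm_num) (hinj h)
      norm_num at this
    rw [show ((0:ℕ):ℤ_[2]) = 0 by norm_cast, show ((1:ℕ):ℤ_[2]) = 1 by norm_cast,
        B0_eq B f hf, B1_eq B f hf] at hne
    have hnd : ¬ (2:ℤ_[2])^1 ∣ (B 0 - B 1) := fun h => hne ((toZModPow_eq_iff _ _ 1).mpr h)
    have key : ∀ x y : ZMod (2^1), x ≠ y → x + y - 1 = 0 := by decide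
    have hgo : PadicInt.toZModPow 1 (B 0 + B 1 - 1) = PadicInt.toZModPow 1 0 := by
      rw [map_sub, map_add, map_one, map_zero]
      exact key _ _ hne
    have h2 := (toZModPow_eq_iff _ _ 1).mp hgo
    rwa [sub_zero, pow_one] at h2
  · intro m hm
    set n := Nat.log 2 m with hn
    have hpow : 2^n ≤ m := Nat.pow_log_le_self 2 (by omega)
    have hm2 : m < 2^(n+1) := Nat.lt_pow_succ_log_self (by norm_num) m
    set m0 := m - 2^n with hm0
    have h2n : 0 < 2^n := Nat.pow_pos (by norm_num)
    have hBm := B_eq B f hf m hm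
    rw [← hn, ← hm0] at hBm
    rw [norm_eq_pow_iff]
    constructor
    · rw [hBm]
      exact lip_dvd f hlip _ _ _ (norm_natCast_sub m m0 (by omega) n
        (by have : m - m0 = 2^n := by omega
            rw [this]))
    · intro hdvd
      rw [hBm] at hdvd
      have heq : PadicInt.toZModPow (n+1) (f (m:ℤ_[2])) = PadicInt.toZModPow (n+1) (f (m0:ℤ_[2])) :=
        (toZModPow_eq_iff _ _ (n+1)).mpr hdvd
      rw [← inducedMod_natCast f (n+1) m hm2,
          ← inducedMod_natCast f (n+1) m0 (by omega)] at heq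
      have := natCast_inj_of_lt (k := n+1) hm2 (by omega) ((hbij (n+1) (by omega)).injective heq)
      omega

lemma key_step (B : ℕ → ℤ_[2]) (f : ℤ_[2] → ℤ_[2])
    (hf : ∀ x, f x = ∑' m, B m * vdpChi m x)
    (h2 : ∀ m : ℕ, 2 ≤ m → ‖B m‖ = (2 : ℝ) ^ (-(Nat.log 2 m : ℤ)))
    (k c : ℕ) (hk : 1 ≤ k) (hc : c < 2^k) :
    ¬ (2:ℤ_[2])^(k+1) ∣ (f ((c + 2^k : ℕ) : ℤ_[2]) - f ((c:ℕ) : ℤ_[2])) := by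
  set m := c + 2^k with hmdef
  have h2k : 2 ≤ 2^k := by
    calc 2 = 2^1 := (pow_one 2).symm
    _ ≤ 2^k := Nat.pow_le_pow_right (by norm_num) hk
  have hm : 2 ≤ m := by omega
  have hlog : Nat.log 2 m = k :=
    Nat.log_eq_of_pow_le_of_lt_pow (by omega) (by
      have : 2^(k+1) = 2^k + 2^k := by ring
      omega)
  have hBm := B_eq B f hf m hm
  rw [hlog] at hBm
  have hm0 : m - 2^k = c := by omega
  rw [hm0] at hBm
  have hnorm := h2 m hm
  rw [hlog, norm_eq_pow_iff] at hnorm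
  rw [← hBm]
  exact hnorm.2

lemma backward_inj (B : ℕ → ℤ_[2]) (f : ℤ_[2] → ℤ_[2])
    (hlip : ∀ a b : ℤ_[2], ‖f a - f b‖ ≤ ‖a - b‖)
    (hf : ∀ x, f x = ∑' m, B m * vdpChi m x)
    (h1 : (2 : ℤ_[2]) ∣ (B 0 + B 1 - 1))
    (h2 : ∀ m : ℕ, 2 ≤ m → ‖B m‖ = (2 : ℝ) ^ (-(Nat.log 2 m : ℤ)))
    (k : ℕ) : Function.Injective (inducedMod f (k+1)) := by
  haveI : ∀ j : ℕ, NeZero (2^j) := fun j => ⟨by positivity⟩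
  induction k with
  | zero =>
    intro z w h
    have hzv : z.val < 2^1 := ZMod.val_lt z
    have hwv : w.val < 2^1 := ZMod.val_lt w
    unfold inducedMod at h
    -- suffices to show vals are equal
    suffices hs : z.val = w.val by
      rw [← ZMod.natCast_rightInverse z, ← ZMod.natCast_rightInverse w, hs]
    by_contra hne
    -- wlog: one is 0 and other is 1
    have hd : PadicInt.toZModPow 1 (f ((0:ℕ):ℤ_[2])) = PadicInt.toZModPow 1 (f ((1:ℕ):ℤ_[2])) := by
      rcases (by omega : z.val = 0 ∧ w.val = 1 ∨ z.val = 1 ∧ w.val = 0) with ⟨h0, h1'⟩ | ⟨h0, h1'⟩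
      · rw [h0, h1'] at h; exact h
      · rw [h0, h1'] at h; exact h.symm
    rw [show ((0:ℕ):ℤ_[2]) = 0 by norm_cast, show ((1:ℕ):ℤ_[2]) = 1 by norm_cast,
        B0_eq B f hf, B1_eq B f hf] at hd
    have hdvd := (toZModPow_eq_iff _ _ 1).mp hd
    rw [pow_one] at hdvd
    -- 2 ∣ B0 - B1 and 2 ∣ B0 + B1 - 1 gives 2 ∣ 1
    apply not_two_dvd_one
    have h2B : (2:ℤ_[2]) ∣ 2 * B 0 := Dvd.intro _ rfl
    have : (1:ℤ_[2]) = 2 * B 0 - ((B 0 - B 1) + (B 0 + B 1 - 1)) := by ring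
    rw [this]
    exact dvd_sub h2B (dvd_add hdvd h1)
  | succ k IH =>
    intro z w h
    set a := z.val with hadef
    set b := w.val with hbdef
    have hav : a < 2^(k+2) := ZMod.val_lt z
    have hbv : b < 2^(k+2) := ZMod.val_lt w
    unfold inducedMod at h
    rw [← hadef, ← hbdef] at h
    have hd : (2:ℤ_[2])^(k+2) ∣ (f (a:ℤ_[2]) - f (b:ℤ_[2])) := (toZModPow_eq_iff _ _ _).mp h
    have hd' : (2:ℤ_[2])^(k+1) ∣ (f (a:ℤ_[2]) - f (b:ℤ_[2])) :=
      dvd_trans (pow_dvd_pow 2 (by omega)) hd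
    set a' := a % 2^(k+1) with ha'
    set b' := b % 2^(k+1) with hb'
    have hpos : 0 < 2^(k+1) := Nat.pow_pos (by norm_num)
    have hda := Nat.div_add_mod a (2^(k+1))
    have hdb := Nat.div_add_mod b (2^(k+1))
    have haeq : a = 2^(k+1) * (a / 2^(k+1)) + a' := (Nat.div_add_mod a (2^(k+1))).symm
    have hbeq : b = 2^(k+1) * (b / 2^(k+1)) + b' := (Nat.div_add_mod b (2^(k+1))).symm
    have hfa : (2:ℤ_[2])^(k+1) ∣ (f (a:ℤ_[2]) - f (a':ℤ_[2])) :=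
      lip_dvd f hlip _ _ _ (norm_natCast_sub a a' (Nat.mod_le _ _) _
        ⟨a / 2^(k+1), by conv_lhs => rw [haeq, Nat.add_sub_cancel]⟩)
    have hfb : (2:ℤ_[2])^(k+1) ∣ (f (b:ℤ_[2]) - f (b':ℤ_[2])) :=
      lip_dvd f hlip _ _ _ (norm_natCast_sub b b' (Nat.mod_le _ _) _
        ⟨b / 2^(k+1), by conv_lhs => rw [hbeq, Nat.add_sub_cancel]⟩)
    have hfab : (2:ℤ_[2])^(k+1) ∣ (f (a':ℤ_[2]) - f (b':ℤ_[2])) := by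
      have heq : f (a':ℤ_[2]) - f (b':ℤ_[2]) =
          (f (a:ℤ_[2]) - f (b:ℤ_[2])) - (f (a:ℤ_[2]) - f (a':ℤ_[2]))
            + (f (b:ℤ_[2]) - f (b':ℤ_[2])) := by ring
      rw [heq]
      exact dvd_add (dvd_sub hd' hfa) hfb
    have ha'lt : a' < 2^(k+1) := Nat.mod_lt _ hpos
    have hb'lt : b' < 2^(k+1) := Nat.mod_lt _ hpos
    have hcast : inducedMod f (k+1) ((a' : ZMod (2^(k+1)))) = inducedMod f (k+1) ((b' : ZMod (2^(k+1)))) := by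
      rw [inducedMod_natCast f (k+1) a' ha'lt, inducedMod_natCast f (k+1) b' hb'lt]
      exact (toZModPow_eq_iff _ _ _).mpr hfab
    have ha'b' : a' = b' := natCast_inj_of_lt ha'lt hb'lt (IH hcast)
    -- now compare quotients
    have hpow2 : 2^(k+2) = 2^(k+1) * 2 := by ring
    have hqa : a / 2^(k+1) < 2 := Nat.div_lt_of_lt_mul (by omega)
    have hqb : b / 2^(k+1) < 2 := Nat.div_lt_of_lt_mul (by omega)
    obtain ⟨qa, hqa'⟩ : ∃ q, a / 2^(k+1) = q := ⟨_, rfl⟩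
    obtain ⟨qb, hqb'⟩ : ∃ q, b / 2^(k+1) = q := ⟨_, rfl⟩
    rw [hqa'] at hqa haeq
    rw [hqb'] at hqb hbeq
    rcases (by omega : qa = qb ∨ (qa = 0 ∧ qb = 1) ∨ (qa = 1 ∧ qb = 0)) with
      hq | ⟨hq0, hq1⟩ | ⟨hq0, hq1⟩
    · have hab : a = b := by rw [haeq, hbeq, hq, ha'b']
      rw [← ZMod.natCast_rightInverse z, ← ZMod.natCast_rightInverse w, ← hadef, ← hbdef, hab]
    · exfalso
      rw [hq0, Nat.mul_zero, Nat.zero_add] at haeq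
      rw [hq1, Nat.mul_one] at hbeq
      have hbform : a' + 2^(k+1) = b := by omega
      apply key_step B f hf h2 (k+1) a' (by omega) ha'lt
      rw [hbform, ← haeq]
      have heq2 : f ((b:ℕ):ℤ_[2]) - f ((a:ℕ):ℤ_[2]) = -(f (a:ℤ_[2]) - f (b:ℤ_[2])) := by ring
      rw [heq2]
      exact dvd_neg.mpr hd
    · exfalso
      rw [hq1, Nat.mul_zero, Nat.zero_add] at hbeq
      rw [hq0, Nat.mul_one] at haeq
      have haform : b' + 2^(k+1) = a := by omega
      apply key_step B f hf h2 (k+1) b' (by omega) hb'lt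
      rw [haform, ← hbeq]
      exact hd

/-- **Measure-preservation criterion in terms of van der Put coefficients.** A T-function
(1-Lipschitz function) `f : ℤ_2 → ℤ_2` with van der Put series `f x = Σ' m, B m · χ(m,x)`
is bijective modulo `2^k` for every `k ≥ 1` (i.e. measure-preserving) if and only if
(1) `B 0 + B 1 ≡ 1 (mod 2)`, and (2) `‖B m‖ = 2^{-⌊log_2 m⌋}` for all `m ≥ 2`. -/
theorem vdp_measure_preservation_criterion
    (B : ℕ → ℤ_[2]) (hB : Tendsto B atTop (nhds 0))
    (f : ℤ_[2] → ℤ_[2]) (hlip : ∀ a b : ℤ_[2], ‖f a - f b‖ ≤ ‖a - b‖)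
    (hf : ∀ x : ℤ_[2], f x = ∑' m : ℕ, B m * vdpChi m x) :
    (∀ k : ℕ, 1 ≤ k → Function.Bijective (inducedMod f k)) ↔
      ((2 : ℤ_[2]) ∣ (B 0 + B 1 - 1) ∧
        ∀ m : ℕ, 2 ≤ m → ‖B m‖ = (2 : ℝ) ^ (-(Nat.log 2 m : ℤ))) := by
  constructor
  · intro hbij
    exact forward_dir B f hlip hf hbij
  · rintro ⟨h1, h2⟩ k hk
    obtain ⟨j, rfl⟩ : ∃ j, k = j + 1 := ⟨k - 1, by omega⟩
    haveI : NeZero (2^(j+1)) := ⟨by positivity⟩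
    exact Finite.injective_iff_bijective.mp (backward_inj B f hlip hf h1 h2 j)
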